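/- For every α with 0 < α < 1, one has 4·3^{α+2} − 4^{α+2} − 6·2^{α+2} + 4 ≠ 0. -/

import Mathlib

open Real

lemma c_lb : (84:ℝ)/53 < Real.logb 2 3 := by
  rw [Real.lt_logb_iff_rpow_lt (by norm_num) (by norm_num)]
  have h : ((2:ℝ) ^ ((84:ℝ)/53)) ^ (53:ℕ) = 2 ^ (84:ℕ) := by
    rw [← Real.rpow_natCast ((2:ℝ) ^ ((84:ℝ)/53)) 53, ← Real.rpow_mul (by norm_num),
      ← Real.rpow_natCast 2 84]
    norm_num
  have hp : ((2:ℝ) ^ ((84:ℝ)/53)) ^ (53:ℕ) < 3 ^ (53:ℕ) := by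
    rw [h]; norm_num
  exact (pow_lt_pow_iff_left₀ (Real.rpow_nonneg (by norm_num) _)
    (by norm_num : (0:ℝ) ≤ 3) (by norm_num : (53:ℕ) ≠ 0)).mp hp

lemma c_ub : Real.logb 2 3 < (65:ℝ)/41 := by
  rw [Real.logb_lt_iff_lt_rpow (by norm_num) (by norm_num)]
  have h : ((2:ℝ) ^ ((65:ℝ)/41)) ^ (41:ℕ) = 2 ^ (65:ℕ) := by
    rw [← Real.rpow_natCast ((2:ℝ) ^ ((65:ℝ)/41)) 41, ← Real.rpow_mul (by norm_num),
      ← Real.rpow_natCast 2 65]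
    norm_num
  have hp : (3:ℝ) ^ (41:ℕ) < ((2:ℝ) ^ ((65:ℝ)/41)) ^ (41:ℕ) := by
    rw [h]; norm_num
  exact (pow_lt_pow_iff_left₀ (by norm_num : (0:ℝ) ≤ 3)
    (Real.rpow_nonneg (by norm_num) _) (by norm_num : (41:ℕ) ≠ 0)).mp hp

lemma key (s : ℝ) : (3:ℝ) ^ s ≤ (Real.logb 2 3 - 1) * 4 ^ s + (2 - Real.logb 2 3) * 2 ^ s := by
  set c := Real.logb 2 3 with hc
  have h1 : (1:ℝ) < c := by have := c_lb; linarith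
  have h2 : c < 2 := by have := c_ub; linarith
  have hgm := Real.geom_mean_le_arith_mean2_weighted (by linarith : (0:ℝ) ≤ c - 1)
    (by linarith : (0:ℝ) ≤ 2 - c) (Real.rpow_nonneg (by norm_num : (0:ℝ) ≤ 4) s)
    (Real.rpow_nonneg (by norm_num : (0:ℝ) ≤ 2) s) (by ring)
  refine le_trans (le_of_eq ?_) hgm
  have e4 : (4:ℝ) ^ s = (2:ℝ) ^ (2*s) := by
    rw [show (4:ℝ) = (2:ℝ)^(2:ℝ) by
        rw [show ((2:ℝ):ℝ) = ((2:ℕ):ℝ) by norm_num, Real.rpow_natCast]; norm_num,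
      ← Real.rpow_mul (by norm_num)]
  have e3 : (3:ℝ) ^ s = (2:ℝ) ^ (c*s) := by
    rw [show (3:ℝ) = (2:ℝ)^c from (Real.rpow_logb (by norm_num) (by norm_num) (by norm_num)).symm,
      ← Real.rpow_mul (by norm_num)]
  rw [e4, e3, ← Real.rpow_mul (by norm_num), ← Real.rpow_mul (by norm_num),
    ← Real.rpow_add (by norm_num)]
  ring_nf

set_option maxHeartbeats 1000000 in
/-- For every `α ∈ (0,1)`,
`4·3^{α+2} − 4^{α+2} − 6·2^{α+2} + 4 ≠ 0`. -/
theorem stmt_9 (α : ℝ) (hα0 : 0 < α) (hα1 : α < 1) :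
    4 * (3 : ℝ) ^ (α + 2) - (4 : ℝ) ^ (α + 2) - 6 * (2 : ℝ) ^ (α + 2) + 4 ≠ 0 := by
  have hc1 : (84:ℝ)/53 < Real.logb 2 3 := c_lb
  have hc2 : Real.logb 2 3 < (65:ℝ)/41 := c_ub
  set x := (2:ℝ) ^ α with hxdef
  set y := (3:ℝ) ^ α with hydef
  have hxp : 0 < x := Real.rpow_pos_of_pos (by norm_num) _
  have hyp : 0 < y := Real.rpow_pos_of_pos (by norm_num) _
  have hx1 : 1 < x := by
    have := Real.rpow_lt_rpow_of_exponent_lt (by norm_num : (1:ℝ) < 2) hα0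
    rwa [Real.rpow_zero] at this
  have hx2 : x < 2 := by
    have := Real.rpow_lt_rpow_of_exponent_lt (by norm_num : (1:ℝ) < 2) hα1
    rwa [Real.rpow_one] at this
  have e4 : (4:ℝ) ^ α = x * x := by
    rw [show (4:ℝ) = 2 * 2 by norm_num, Real.mul_rpow (by norm_num) (by norm_num)]
  have e32 : (3:ℝ) ^ (α + 2) = y * 9 := by
    rw [Real.rpow_add (by norm_num), show ((2:ℝ):ℝ) = ((2:ℕ):ℝ) by norm_num,
      Real.rpow_natCast]
    norm_num
    exact hydef.symm
  have e42 : (4:ℝ) ^ (α + 2) = (x * x) * 16 := by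
    rw [Real.rpow_add (by norm_num), show ((2:ℝ):ℝ) = ((2:ℕ):ℝ) by norm_num,
      Real.rpow_natCast, e4]
    norm_num
  have e22 : (2:ℝ) ^ (α + 2) = x * 4 := by
    rw [Real.rpow_add (by norm_num), show ((2:ℝ):ℝ) = ((2:ℕ):ℝ) by norm_num,
      Real.rpow_natCast]
    norm_num
    exact hxdef.symm
  rw [e32, e42, e22]
  have m3 : (3:ℝ) ^ (-α) = y⁻¹ := by rw [Real.rpow_neg (by norm_num)]
  have m2 : (2:ℝ) ^ (-α) = x⁻¹ := by rw [Real.rpow_neg (by norm_num)]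
  have m4 : (4:ℝ) ^ (-α) = (x * x)⁻¹ := by rw [Real.rpow_neg (by norm_num), e4]
  clear_value x y
  have hx0 : x ≠ 0 := ne_of_gt hxp
  have hy0 : y ≠ 0 := ne_of_gt hyp
  suffices h : 4 * (x * x) + 6 * x < 9 * y + 1 by
    refine ne_of_gt ?_
    linarith
  rcases le_or_gt x (6/5) with hcase | hcase
  · -- anchor β = 0
    have k0 := key (-α)
    rw [m3, m4, m2] at k0
    have H0 : x * x ≤ (Real.logb 2 3 - 1) * y + (2 - Real.logb 2 3) * (y * x) := by
      have h := mul_le_mul_of_nonneg_left k0 (show (0:ℝ) ≤ y * (x * x) by positivity)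
      calc x * x = y * (x * x) * y⁻¹ := by field_simp
        _ ≤ y * (x * x) * ((Real.logb 2 3 - 1) * (x * x)⁻¹ + (2 - Real.logb 2 3) * x⁻¹) := h
        _ = (Real.logb 2 3 - 1) * y + (2 - Real.logb 2 3) * (y * x) := by
            field_simp
    clear k0 m3 m2 m4 e4 e32 e42 e22 hα0 hα1 hx0 hy0
    nlinarith [H0, mul_pos hxp hyp, hyp.le,
      mul_nonneg (sub_nonneg.2 hx1.le) (sub_nonneg.2 hcase),
      mul_nonneg (sub_nonneg.2 hc1.le)
        (mul_nonneg (sub_nonneg.2 hx1.le) (by nlinarith : (0:ℝ) ≤ 4*x^2 + 6*x - 1)),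
      mul_pos (sub_pos.2 hx1) hyp]
  rcases le_or_gt x (33/20) with hcase2 | hcase2
  · -- anchor β = 1/2
    have k2 := key (1/2 - α)
    have e412 : (4:ℝ) ^ ((1:ℝ)/2) = 2 := by
      rw [show (4:ℝ) = (2:ℝ)^(2:ℕ) by norm_num, ← Real.rpow_natCast 2 2,
        ← Real.rpow_mul (by norm_num)]
      norm_num
    set s2 : ℝ := (2:ℝ) ^ ((1:ℝ)/2) with hs2def
    set s3 : ℝ := (3:ℝ) ^ ((1:ℝ)/2) with hs3def
    have hs2p : 0 < s2 := Real.rpow_pos_of_pos (by norm_num) _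
    have hs3p : 0 < s3 := Real.rpow_pos_of_pos (by norm_num) _
    have hs2 : s2 ^ 2 = 2 := by
      rw [hs2def, ← Real.rpow_natCast _ 2, ← Real.rpow_mul (by norm_num)]
      norm_num
    have hs3 : s3 ^ 2 = 3 := by
      rw [hs3def, ← Real.rpow_natCast _ 2, ← Real.rpow_mul (by norm_num)]
      norm_num
    clear_value s2 s3
    have hs2lb : 1.414 < s2 := by nlinarith
    have hs2ub : s2 < 1.41422 := by nlinarith
    have hs3lb : 1.7320 < s3 := by nlinarith
    have hs3ub : s3 < 1.7321 := by nlinarith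
    have r3 : (3:ℝ) ^ ((1:ℝ)/2 - α) = s3 / y := by
      rw [Real.rpow_sub (by norm_num), ← hydef, ← hs3def]
    have r4 : (4:ℝ) ^ ((1:ℝ)/2 - α) = 2 / (x * x) := by
      rw [Real.rpow_sub (by norm_num), e412, e4]
    have r2 : (2:ℝ) ^ ((1:ℝ)/2 - α) = s2 / x := by
      rw [Real.rpow_sub (by norm_num), ← hxdef, ← hs2def]
    rw [r3, r4, r2] at k2
    have Hh : s3 * (x * x) ≤ 2 * (Real.logb 2 3 - 1) * y + s2 * (2 - Real.logb 2 3) * (y * x) := by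
      have h := mul_le_mul_of_nonneg_left k2 (show (0:ℝ) ≤ y * (x * x) by positivity)
      calc s3 * (x * x) = y * (x * x) * (s3 / y) := by field_simp
        _ ≤ y * (x * x) * ((Real.logb 2 3 - 1) * (2 / (x * x)) + (2 - Real.logb 2 3) * (s2 / x)) := h
        _ = 2 * (Real.logb 2 3 - 1) * y + s2 * (2 - Real.logb 2 3) * (y * x) := by
            field_simp
    obtain ⟨a, hadef⟩ : ∃ a, a = 2 * (Real.logb 2 3 - 1) := ⟨_, rfl⟩
    obtain ⟨b, hbdef⟩ : ∃ b, b = s2 * (2 - Real.logb 2 3) := ⟨_, rfl⟩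
    rw [← hadef, ← hbdef] at Hh
    have ha1 : 1.169 < a := by rw [hadef]; nlinarith
    have ha2 : a < 1.1708 := by rw [hadef]; nlinarith
    have hb1 : 0.586 < b := by rw [hbdef]; nlinarith
    have hb2 : b < 0.5871 := by rw [hbdef]; nlinarith
    clear k2 hadef hbdef r3 r4 r2 m3 m2 m4 e4 e32 e42 e22 hs2 hs2p hs3p hα0 hα1 hc1 hc2 hs2lb hs2ub hs3ub hs3 hx0 hy0 e412
    have hq : (0:ℝ) ≤ 4*x^2 + 6*x - 1 := by nlinarith
    nlinarith [Hh, mul_pos hxp hyp, hyp.le, hs3lb,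
      mul_nonneg (sub_nonneg.2 hcase.le) (sub_nonneg.2 hcase2),
      mul_nonneg (mul_nonneg (sub_nonneg.2 hcase.le) (sub_nonneg.2 hcase2)) hxp.le,
      mul_nonneg (sub_nonneg.2 ha2.le) hq,
      mul_nonneg (mul_nonneg (sub_nonneg.2 hb2.le) hq) hxp.le,
      mul_nonneg (sub_nonneg.2 hs3lb.le) (mul_nonneg hxp.le hxp.le),
      mul_pos (show (0:ℝ) < a + b*x by nlinarith) hyp]
  · -- anchor β = 1
    have k1 := key (1 - α)
    have r3 : (3:ℝ) ^ (1 - α) = 3 / y := by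
      rw [Real.rpow_sub (by norm_num), Real.rpow_one, ← hydef]
    have r4 : (4:ℝ) ^ (1 - α) = 4 / (x * x) := by
      rw [Real.rpow_sub (by norm_num), Real.rpow_one, e4]
    have r2 : (2:ℝ) ^ (1 - α) = 2 / x := by
      rw [Real.rpow_sub (by norm_num), Real.rpow_one, ← hxdef]
    rw [r3, r4, r2] at k1
    have H1 : 3 * (x * x) ≤ 4 * (Real.logb 2 3 - 1) * y + 2 * (2 - Real.logb 2 3) * (y * x) := by
      have h := mul_le_mul_of_nonneg_left k1 (show (0:ℝ) ≤ y * (x * x) by positivity)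
      calc 3 * (x * x) = y * (x * x) * (3 / y) := by field_simp
        _ ≤ y * (x * x) * ((Real.logb 2 3 - 1) * (4 / (x * x)) + (2 - Real.logb 2 3) * (2 / x)) := h
        _ = 4 * (Real.logb 2 3 - 1) * y + 2 * (2 - Real.logb 2 3) * (y * x) := by
            field_simp
    clear k1 r3 r4 r2 m3 m2 m4 e4 e32 e42 e22 hα0 hα1 hx0 hy0 hc1
    nlinarith [H1, mul_pos hxp hyp, hyp.le,
      mul_nonneg (sub_nonneg.2 hcase2.le) (sub_nonneg.2 hx2.le),
      mul_pos (sub_pos.2 hx2) hyp,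
      mul_nonneg (sub_nonneg.2 hc2.le)
        (mul_nonneg (sub_nonneg.2 hx2.le) (by nlinarith : (0:ℝ) ≤ 4*x^2 + 6*x - 1)),
      sq_nonneg (x - 33/20), mul_pos hxp hxp]
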